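/- Suppose the log-Brunn-Minkowski inequality holds in ℝⁿ: |(1-λ)·K ⊕₀ λ·L| ≥ |K|^{1-λ}|L|^λ for all symmetric convex bodies K, L and λ ∈ [0,1]. Then for p ∈ [0,1], |(1-λ)·K ⊕_p λ·L| ≥ M_{p/n}^λ(|K|, |L|) for all symmetric convex bodies K, L and λ ∈ [0,1]. -/

import Mathlib

open MeasureTheory Real Set

/-- Weighted `p`-mean (`p > 0`) resp. weighted geometric mean (`p = 0`). -/
noncomputable def pmean (p l a b : ℝ) : ℝ :=
  if p = 0 then a ^ (1 - l) * b ^ l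
  else ((1 - l) * a ^ p + l * b ^ p) ^ (1 / p)

/-- Support function of a set. -/
noncomputable def suppFn {n : ℕ} (K : Set (EuclideanSpace ℝ (Fin n)))
    (u : EuclideanSpace ℝ (Fin n)) : ℝ :=
  sSup ((fun x => (inner ℝ x u : ℝ)) '' K)

/-- The `p`-sum `(1-λ)·K ⊕_p λ·L`. -/
noncomputable def psum {n : ℕ} (p l : ℝ) (K L : Set (EuclideanSpace ℝ (Fin n))) :
    Set (EuclideanSpace ℝ (Fin n)) :=
  {x | ∀ u : EuclideanSpace ℝ (Fin n), ‖u‖ = 1 →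
    (inner ℝ x u : ℝ) ≤ pmean p l (suppFn K u) (suppFn L u)}

/-- A symmetric convex body. -/
def IsSymmConvexBody {n : ℕ} (K : Set (EuclideanSpace ℝ (Fin n))) : Prop :=
  IsCompact K ∧ Convex ℝ K ∧ (interior K).Nonempty ∧ K = -K

open Pointwise

lemma pmean_l0 {p s t : ℝ} (hp : 0 ≤ p) (hs : 0 ≤ s) : pmean p 0 s t = s := by
  unfold pmean
  split_ifs with h
  · simp
  · have hp' : 0 < p := hp.lt_of_ne (Ne.symm h)
    simp only [sub_zero, one_mul, zero_mul, add_zero]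
    rw [← Real.rpow_mul hs, mul_one_div_cancel hp'.ne', Real.rpow_one]

lemma pmean_l1 {p s t : ℝ} (hp : 0 ≤ p) (ht : 0 ≤ t) : pmean p 1 s t = t := by
  unfold pmean
  split_ifs with h
  · simp
  · have hp' : 0 < p := hp.lt_of_ne (Ne.symm h)
    simp only [sub_self, zero_mul, one_mul, zero_add]
    rw [← Real.rpow_mul ht, mul_one_div_cancel hp'.ne', Real.rpow_one]

lemma zero_mem_body {n : ℕ} {K : Set (EuclideanSpace ℝ (Fin n))}
    (hK : IsSymmConvexBody K) : (0:EuclideanSpace ℝ (Fin n)) ∈ K := by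
  obtain ⟨x, hx⟩ := hK.2.2.1
  have hxK : x ∈ K := interior_subset hx
  have hmx : -x ∈ K := by rw [hK.2.2.2]; exact Set.neg_mem_neg.2 hxK
  have := hK.2.1 hxK hmx (by norm_num : (0:ℝ) ≤ 1/2) (by norm_num : (0:ℝ) ≤ 1/2) (by norm_num)
  simpa using this

lemma suppFn_bddAbove {n : ℕ} {K : Set (EuclideanSpace ℝ (Fin n))}
    (hK : IsCompact K) (u : EuclideanSpace ℝ (Fin n)) :
    BddAbove ((fun x => (inner ℝ x u : ℝ)) '' K) :=
  (hK.image (Continuous.inner continuous_id continuous_const)).bddAbove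

lemma le_suppFn {n : ℕ} {K : Set (EuclideanSpace ℝ (Fin n))}
    (hK : IsCompact K) {x : EuclideanSpace ℝ (Fin n)} (hx : x ∈ K)
    (u : EuclideanSpace ℝ (Fin n)) : (inner ℝ x u : ℝ) ≤ suppFn K u :=
  le_csSup (suppFn_bddAbove hK u) (Set.mem_image_of_mem _ hx)

lemma suppFn_nonneg {n : ℕ} {K : Set (EuclideanSpace ℝ (Fin n))}
    (hK : IsSymmConvexBody K) (u : EuclideanSpace ℝ (Fin n)) : 0 ≤ suppFn K u := by
  have := le_suppFn hK.1 (zero_mem_body hK) u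
  simpa using this

lemma suppFn_le {n : ℕ} {K : Set (EuclideanSpace ℝ (Fin n))}
    (hK : IsSymmConvexBody K) {R : ℝ} (hR : K ⊆ Metric.closedBall 0 R)
    {u : EuclideanSpace ℝ (Fin n)} (hu : ‖u‖ = 1) : suppFn K u ≤ R := by
  apply csSup_le ⟨_, Set.mem_image_of_mem _ (zero_mem_body hK)⟩
  rintro _ ⟨x, hx, rfl⟩
  calc (inner ℝ x u : ℝ) ≤ ‖x‖ * ‖u‖ := real_inner_le_norm x u
    _ = ‖x‖ := by rw [hu, mul_one]
    _ ≤ R := by simpa [Metric.mem_closedBall, dist_zero_right] using hR hx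

lemma pmean_le {p l s t M : ℝ} (hp : 0 ≤ p) (hl0 : 0 ≤ l) (hl1 : l ≤ 1)
    (hs : 0 ≤ s) (ht : 0 ≤ t) (hsM : s ≤ M) (htM : t ≤ M) : pmean p l s t ≤ M := by
  have hM : 0 ≤ M := le_trans hs hsM
  unfold pmean
  split_ifs with h
  · have h1 : s ^ (1-l) ≤ M ^ (1-l) := Real.rpow_le_rpow hs hsM (by linarith)
    have h2 : t ^ l ≤ M ^ l := Real.rpow_le_rpow ht htM hl0
    have h3 : M ^ (1-l) * M ^ l = M := by
      rw [← Real.rpow_add' hM (by norm_num)]; norm_num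
    calc s ^ (1-l) * t ^ l ≤ M ^ (1-l) * M ^ l :=
          mul_le_mul h1 h2 (by positivity) (by positivity)
      _ = M := h3
  · have hp' : 0 < p := lt_of_le_of_ne hp (Ne.symm h)
    have h1 : s ^ p ≤ M ^ p := Real.rpow_le_rpow hs hsM hp
    have h2 : t ^ p ≤ M ^ p := Real.rpow_le_rpow ht htM hp
    have h4 : (1-l) * s ^ p + l * t ^ p ≤ (1-l) * M ^ p + l * M ^ p := by
      nlinarith [mul_le_mul_of_nonneg_left h1 (by linarith : (0:ℝ) ≤ 1-l),
        mul_le_mul_of_nonneg_left h2 hl0]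
    have h5 : (1-l) * M ^ p + l * M ^ p = M ^ p := by ring
    have h6 : (M ^ p) ^ (1/p) = M := by
      rw [← Real.rpow_mul hM, mul_one_div_cancel hp'.ne', Real.rpow_one]
    calc ((1-l) * s ^ p + l * t ^ p) ^ (1/p)
        ≤ ((1-l) * M ^ p + l * M ^ p) ^ (1/p) :=
          Real.rpow_le_rpow (add_nonneg (mul_nonneg (by linarith) (Real.rpow_nonneg hs p))
            (mul_nonneg hl0 (Real.rpow_nonneg ht p))) h4 (by positivity)
      _ = M := by rw [h5, h6]

lemma key_pointwise {p l μ x y : ℝ} (hp : 0 < p) (hl0 : 0 < l) (hl1 : l < 1)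
    (hμ0 : 0 < μ) (hμ1 : μ < 1) (hx : 0 ≤ x) (hy : 0 ≤ y) :
    ((1-l)/(1-μ)) ^ ((1-μ)/p) * (l/μ) ^ (μ/p) * (x ^ (1-μ) * y ^ μ)
      ≤ ((1-l) * x ^ p + l * y ^ p) ^ (1/p) := by
  have h1μ : (0:ℝ) < 1 - μ := by linarith
  have h1l : (0:ℝ) < 1 - l := by linarith
  set u := (1-l)/(1-μ) * x ^ p with hu
  set v := l/μ * y ^ p with hv
  have hu0 : 0 ≤ u := by positivity
  have hv0 : 0 ≤ v := by positivity
  have amgm : u ^ (1-μ) * v ^ μ ≤ (1-μ) * u + μ * v :=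
    Real.geom_mean_le_arith_mean2_weighted h1μ.le hμ0.le hu0 hv0 (by ring)
  have hsum : (1-μ) * u + μ * v = (1-l) * x ^ p + l * y ^ p := by
    rw [hu, hv]; field_simp
  have hxswap : (x ^ (1-μ)) ^ p = (x ^ p) ^ (1-μ) := by
    rw [← Real.rpow_mul hx, ← Real.rpow_mul hx, mul_comm]
  have hyswap : (y ^ μ) ^ p = (y ^ p) ^ μ := by
    rw [← Real.rpow_mul hy, ← Real.rpow_mul hy, mul_comm]
  have hxp : ((1-l)/(1-μ)) ^ (1-μ) * (x ^ (1-μ)) ^ p = u ^ (1-μ) := by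
    rw [hu, Real.mul_rpow (by positivity) (by positivity), hxswap]
  have hyp : (l/μ) ^ μ * (y ^ μ) ^ p = v ^ μ := by
    rw [hv, Real.mul_rpow (by positivity) (by positivity), hyswap]
  have inner_le : ((1-l)/(1-μ)) ^ (1-μ) * (l/μ) ^ μ * (x ^ (1-μ) * y ^ μ) ^ p
      ≤ (1-l) * x ^ p + l * y ^ p := by
    rw [Real.mul_rpow (by positivity) (by positivity)]
    calc ((1-l)/(1-μ)) ^ (1-μ) * (l/μ) ^ μ * ((x ^ (1-μ)) ^ p * (y ^ μ) ^ p)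
        = (((1-l)/(1-μ)) ^ (1-μ) * (x ^ (1-μ)) ^ p) * ((l/μ) ^ μ * (y ^ μ) ^ p) := by ring
      _ = u ^ (1-μ) * v ^ μ := by rw [hxp, hyp]
      _ ≤ (1-μ) * u + μ * v := amgm
      _ = (1-l) * x ^ p + l * y ^ p := hsum
  have lhs_eq : ((1-l)/(1-μ)) ^ ((1-μ)/p) * (l/μ) ^ (μ/p) * (x ^ (1-μ) * y ^ μ)
      = (((1-l)/(1-μ)) ^ (1-μ) * (l/μ) ^ μ * (x ^ (1-μ) * y ^ μ) ^ p) ^ (1/p) := by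
    rw [Real.mul_rpow (by positivity) (by positivity),
        Real.mul_rpow (by positivity) (by positivity),
        ← Real.rpow_mul (by positivity), ← Real.rpow_mul (by positivity),
        ← Real.rpow_mul (by positivity)]
    rw [mul_one_div (1-μ) p, mul_one_div μ p, mul_one_div_cancel hp.ne', Real.rpow_one]
  rw [lhs_eq]
  exact Real.rpow_le_rpow (by positivity) inner_le (by positivity)

lemma key_algebra (n : ℕ) (hn : 0 < n) {p l a b S μ : ℝ} (hp : 0 < p) (hl0 : 0 < l)
    (hl1 : l < 1) (ha : 0 < a) (hb : 0 < b)
    (hS : S = (1-l) * a ^ (p/(n:ℝ)) + l * b ^ (p/(n:ℝ)))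
    (hμ : μ = l * b ^ (p/(n:ℝ)) / S) :
    (((1-l)/(1-μ)) ^ ((1-μ)/p) * (l/μ) ^ (μ/p)) ^ n * (a ^ (1-μ) * b ^ μ)
      = S ^ ((n:ℝ)/p) := by
  have hn' : (0:ℝ) < n := Nat.cast_pos.2 hn
  have hα : (0:ℝ) < a ^ (p/(n:ℝ)) := Real.rpow_pos_of_pos ha _
  have hβ : (0:ℝ) < b ^ (p/(n:ℝ)) := Real.rpow_pos_of_pos hb _
  have h1l : (0:ℝ) < 1 - l := by linarith
  have hSpos : 0 < S := by rw [hS]; positivity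
  have hμ0 : 0 < μ := by rw [hμ]; positivity
  have hμ1 : μ < 1 := by
    rw [hμ, div_lt_one hSpos, hS]; nlinarith
  have h1μ : (0:ℝ) < 1 - μ := by linarith
  have e1 : (1-l)/(1-μ) = S / a ^ (p/(n:ℝ)) := by
    have : 1 - μ = (1-l) * a ^ (p/(n:ℝ)) / S := by
      rw [hμ, hS]; field_simp; ring
    rw [this, div_div_eq_mul_div, mul_div_mul_left _ _ h1l.ne']
  have e2 : l/μ = S / b ^ (p/(n:ℝ)) := by
    rw [hμ]; field_simp
  rw [e1, e2]
  have hc1 : (0:ℝ) < (S / a ^ (p/(n:ℝ))) ^ ((1-μ)/p) := Real.rpow_pos_of_pos (by positivity) _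
  have hc2 : (0:ℝ) < (S / b ^ (p/(n:ℝ))) ^ (μ/p) := Real.rpow_pos_of_pos (by positivity) _
  have hL : (0:ℝ) < ((S / a ^ (p/(n:ℝ))) ^ ((1-μ)/p) * (S / b ^ (p/(n:ℝ))) ^ (μ/p)) ^ n
      * (a ^ (1-μ) * b ^ μ) := by positivity
  have hR : (0:ℝ) < S ^ ((n:ℝ)/p) := Real.rpow_pos_of_pos hSpos _
  apply Real.log_injOn_pos (Set.mem_Ioi.2 hL) (Set.mem_Ioi.2 hR)
  rw [Real.log_mul (by positivity) (by positivity), Real.log_pow,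
    Real.log_mul hc1.ne' hc2.ne', Real.log_rpow (by positivity), Real.log_rpow (by positivity),
    Real.log_div hSpos.ne' hα.ne', Real.log_div hSpos.ne' hβ.ne',
    Real.log_rpow ha, Real.log_rpow hb,
    Real.log_mul (Real.rpow_pos_of_pos ha _).ne' (Real.rpow_pos_of_pos hb _).ne',
    Real.log_rpow ha, Real.log_rpow hb, Real.log_rpow hSpos]
  field_simp
  ring

lemma psum_vol_ne_top {n : ℕ} {K L : Set (EuclideanSpace ℝ (Fin n))}
    (hK : IsSymmConvexBody K) (hL : IsSymmConvexBody L) {p l : ℝ}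
    (hp : 0 ≤ p) (hl0 : 0 ≤ l) (hl1 : l ≤ 1) : volume (psum p l K L) ≠ ⊤ := by
  obtain ⟨RK, hRK⟩ := hK.1.isBounded.subset_closedBall 0
  obtain ⟨RL, hRL⟩ := hL.1.isBounded.subset_closedBall 0
  set R := max RK RL with hRdef
  have hKR : K ⊆ Metric.closedBall 0 R :=
    hRK.trans (Metric.closedBall_subset_closedBall (le_max_left _ _))
  have hLR : L ⊆ Metric.closedBall 0 R :=
    hRL.trans (Metric.closedBall_subset_closedBall (le_max_right _ _))
  have hR0 : 0 ≤ R := by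
    have := hKR (zero_mem_body hK)
    simpa [Metric.mem_closedBall] using this
  have hsub : psum p l K L ⊆ Metric.closedBall 0 R := by
    intro x hx
    rw [Metric.mem_closedBall, dist_zero_right]
    rcases eq_or_ne x 0 with rfl | hx0
    · simpa using hR0
    · have hnx : 0 < ‖x‖ := norm_pos_iff.2 hx0
      have hu : ‖(‖x‖⁻¹ • x : EuclideanSpace ℝ (Fin n))‖ = 1 := by
        rw [norm_smul, norm_inv, norm_norm, inv_mul_cancel₀ hnx.ne']
      have h1 := hx _ hu
      have h2 : (inner ℝ x (‖x‖⁻¹ • x) : ℝ) = ‖x‖ := by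
        rw [real_inner_smul_right, real_inner_self_eq_norm_mul_norm,
          inv_mul_cancel_left₀ hnx.ne']
      rw [h2] at h1
      exact h1.trans (pmean_le hp hl0 hl1 (suppFn_nonneg hK _) (suppFn_nonneg hL _)
        (suppFn_le hK hKR hu) (suppFn_le hL hLR hu))
  exact ((measure_mono hsub).trans_lt measure_closedBall_lt_top).ne

lemma body_vol_pos {n : ℕ} {K : Set (EuclideanSpace ℝ (Fin n))}
    (hK : IsSymmConvexBody K) : 0 < (volume K).toReal := by
  refine ENNReal.toReal_pos ?_ hK.1.measure_lt_top.ne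
  obtain ⟨x, hx⟩ := hK.2.2.1
  have h1 : 0 < volume (interior K) := isOpen_interior.measure_pos volume ⟨x, hx⟩
  exact (h1.trans_le (measure_mono interior_subset)).ne'

/-- The log-Brunn-Minkowski inequality implies the `p`-Brunn-Minkowski inequality
for `p ∈ [0,1]`. -/
theorem logBM_implies_pBM
    (n : ℕ) (hn : 0 < n)
    (hlog : ∀ K L : Set (EuclideanSpace ℝ (Fin n)), IsSymmConvexBody K → IsSymmConvexBody L →
      ∀ l ∈ Icc (0:ℝ) 1,
        (volume (psum 0 l K L)).toReal ≥ (volume K).toReal ^ (1 - l) * (volume L).toReal ^ l)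
    (p : ℝ) (hp : p ∈ Icc (0:ℝ) 1)
    (K L : Set (EuclideanSpace ℝ (Fin n)))
    (hK : IsSymmConvexBody K) (hL : IsSymmConvexBody L)
    (l : ℝ) (hl : l ∈ Icc (0:ℝ) 1) :
    (volume (psum p l K L)).toReal ≥
      pmean (p / n) l (volume K).toReal (volume L).toReal := by
  rcases eq_or_ne p 0 with rfl | hp0
  · simp only [zero_div]
    have := hlog K L hK hL l hl
    unfold pmean at this ⊢
    simpa using this
  have hp' : 0 < p := hp.1.lt_of_ne (Ne.symm hp0)
  have hfin : volume (psum p l K L) ≠ ⊤ := psum_vol_ne_top hK hL hp.1 hl.1 hl.2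
  have hn' : (0:ℝ) < (n:ℝ) := Nat.cast_pos.2 hn
  have hpn0 : p / (n:ℝ) ≠ 0 := (div_pos hp' hn').ne'
  set a := (volume K).toReal with hadef
  set b := (volume L).toReal with hbdef
  have ha : 0 < a := body_vol_pos hK
  have hb : 0 < b := body_vol_pos hL
  rcases eq_or_ne l 0 with rfl | hl0
  · have hsub : K ⊆ psum p 0 K L := by
      intro x hx u hu
      rw [pmean_l0 hp.1 (suppFn_nonneg hK u)]
      exact le_suppFn hK.1 hx u
    have h1 : a ≤ (volume (psum p 0 K L)).toReal :=
      ENNReal.toReal_mono hfin (measure_mono hsub)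
    rw [ge_iff_le, pmean_l0 (by positivity) ha.le]
    exact h1
  rcases eq_or_ne l 1 with rfl | hl1
  · have hsub : L ⊆ psum p 1 K L := by
      intro x hx u hu
      rw [pmean_l1 hp.1 (suppFn_nonneg hL u)]
      exact le_suppFn hL.1 hx u
    have h1 : b ≤ (volume (psum p 1 K L)).toReal :=
      ENNReal.toReal_mono hfin (measure_mono hsub)
    rw [ge_iff_le, pmean_l1 (by positivity) hb.le]
    exact h1
  have hl0' : 0 < l := hl.1.lt_of_ne (Ne.symm hl0)
  have hl1' : l < 1 := hl.2.lt_of_ne hl1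
  have h1l : (0:ℝ) < 1 - l := by linarith
  set S := (1-l) * a ^ (p/(n:ℝ)) + l * b ^ (p/(n:ℝ)) with hSdef
  have hα : (0:ℝ) < a ^ (p/(n:ℝ)) := Real.rpow_pos_of_pos ha _
  have hβ : (0:ℝ) < b ^ (p/(n:ℝ)) := Real.rpow_pos_of_pos hb _
  have hSpos : 0 < S := by positivity
  set μ := l * b ^ (p/(n:ℝ)) / S with hμdef
  have hμ0 : 0 < μ := by positivity
  have hμ1 : μ < 1 := by
    rw [hμdef, div_lt_one hSpos, hSdef]; nlinarith
  have h1μ : (0:ℝ) < 1 - μ := by linarith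
  set c := ((1-l)/(1-μ)) ^ ((1-μ)/p) * (l/μ) ^ (μ/p) with hcdef
  have hc0 : 0 ≤ c := by positivity
  -- inclusion
  have hsub : c • psum 0 μ K L ⊆ psum p l K L := by
    rintro x ⟨y, hy, rfl⟩ u hu
    have h0 := hy u hu
    rw [real_inner_smul_left]
    have hKu := suppFn_nonneg hK u
    have hLu := suppFn_nonneg hL u
    have hkey := key_pointwise hp' hl0' hl1' hμ0 hμ1 hKu hLu
    have h0' : pmean 0 μ (suppFn K u) (suppFn L u)
        = suppFn K u ^ (1-μ) * suppFn L u ^ μ := by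
      unfold pmean; rw [if_pos rfl]
    have hpl : pmean p l (suppFn K u) (suppFn L u)
        = ((1-l) * suppFn K u ^ p + l * suppFn L u ^ p) ^ (1/p) := by
      unfold pmean; rw [if_neg hp0]
    rw [hpl]
    calc c * (inner ℝ y u : ℝ) ≤ c * pmean 0 μ (suppFn K u) (suppFn L u) :=
          mul_le_mul_of_nonneg_left h0 hc0
      _ = c * (suppFn K u ^ (1-μ) * suppFn L u ^ μ) := by rw [h0']
      _ ≤ ((1-l) * suppFn K u ^ p + l * suppFn L u ^ p) ^ (1/p) := hkey
  -- measure comparison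
  have hsmul : volume (c • psum 0 μ K L)
      = ENNReal.ofReal (c ^ n) * volume (psum 0 μ K L) := by
    rw [Measure.addHaar_smul volume, finrank_euclideanSpace_fin,
      abs_of_nonneg (pow_nonneg hc0 n)]
  have h1 : ENNReal.ofReal (c ^ n) * volume (psum 0 μ K L) ≤ volume (psum p l K L) := by
    rw [← hsmul]; exact measure_mono hsub
  have h2 : c ^ n * (volume (psum 0 μ K L)).toReal ≤ (volume (psum p l K L)).toReal := by
    have := ENNReal.toReal_mono hfin h1
    rwa [ENNReal.toReal_mul, ENNReal.toReal_ofReal (pow_nonneg hc0 n)] at this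
  have h3 : a ^ (1-μ) * b ^ μ ≤ (volume (psum 0 μ K L)).toReal :=
    hlog K L hK hL μ ⟨hμ0.le, hμ1.le⟩
  have halg : c ^ n * (a ^ (1-μ) * b ^ μ) = S ^ ((n:ℝ)/p) :=
    key_algebra n hn hp' hl0' hl1' ha hb hSdef hμdef
  have hpm : pmean (p/(n:ℝ)) l a b = S ^ ((n:ℝ)/p) := by
    unfold pmean; rw [if_neg hpn0, one_div_div]
  rw [ge_iff_le, hpm, ← halg]
  calc c ^ n * (a ^ (1-μ) * b ^ μ) ≤ c ^ n * (volume (psum 0 μ K L)).toReal :=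
        mul_le_mul_of_nonneg_left h3 (pow_nonneg hc0 n)
    _ ≤ (volume (psum p l K L)).toReal := h2
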